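/- Let δ : ℕ → ℝ be a nonnegative nonincreasing sequence, let a ≥ 0, b ≥ 0 and γ ∈ (0,1), and suppose δ (k+1) ≤ a·(δ k - δ (k+1)) + b·(δ k - δ (k+1))^γ for all k. Then there exists a constant C > 0 such that δ k ≤ C·k^(−γ/(1−γ)) for all k ≥ 1. -/

import Mathlib

open Real

lemma key_step (θ α D u v : ℝ) (hθ : 0 < θ) (hα : 0 < α) (hu : 0 < u)
    (huv : u ≤ v) (huD : u ≤ D)
    (hgap : α * u ^ (θ + 1) ≤ v - u) :
    v ^ (-θ) + min (min θ 1 * α / 2) ((1 - 2 ^ (-θ)) * D ^ (-θ)) ≤ u ^ (-θ) := by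
  have hv : 0 < v := lt_of_lt_of_le hu huv
  have hupos : (0:ℝ) < u ^ (-θ) := Real.rpow_pos_of_pos hu _
  rcases le_or_gt v (2 * u) with h2 | h2
  · -- case v ≤ 2u
    refine le_trans (add_le_add_right (min_le_left _ _) _) ?_
    set θ' := min θ 1 with hθ'def
    have hθ'0 : 0 < θ' := lt_min hθ one_pos
    have hθ'1 : θ' ≤ 1 := min_le_right _ _
    have hx0 : 0 < u / v := div_pos hu hv
    have hx1 : u / v ≤ 1 := (div_le_one hv).2 huv
    have h1 : (u / v) ^ θ ≤ (u / v) ^ θ' :=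
      Real.rpow_le_rpow_of_exponent_ge hx0 hx1 (min_le_left _ _)
    have hBern : (u / v) ^ θ' ≤ θ' * (u / v) + (1 - θ') := by
      have h := Real.geom_mean_le_arith_mean2_weighted (w₁ := θ') (w₂ := 1 - θ')
        (p₁ := u / v) (p₂ := 1) hθ'0.le (by linarith) hx0.le zero_le_one (by ring)
      simpa using h
    have hid : v ^ (-θ) = u ^ (-θ) * (u / v) ^ θ := by
      rw [Real.div_rpow hu.le hv.le, Real.rpow_neg hu.le, Real.rpow_neg hv.le]
      have h1 : u ^ θ ≠ 0 := (Real.rpow_pos_of_pos hu θ).ne'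
      have h2 : v ^ θ ≠ 0 := (Real.rpow_pos_of_pos hv θ).ne'
      field_simp
    have hfrac : α * u ^ θ / 2 ≤ (v - u) / v := by
      have hθ1 : u ^ (θ + 1) = u ^ θ * u := by rw [Real.rpow_add hu, Real.rpow_one]
      have hnn : 0 ≤ v - u := by linarith
      have hstep1 : (v - u) / (2 * u) ≤ (v - u) / v :=
        div_le_div_of_nonneg_left hnn (by positivity) h2
      have hstep2 : α * u ^ θ / 2 ≤ (v - u) / (2 * u) := by
        rw [div_le_div_iff₀ (by norm_num) (by positivity)]
        calc α * u ^ θ * (2 * u) = (α * u ^ (θ + 1)) * 2 := by rw [hθ1]; ring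
          _ ≤ (v - u) * 2 := by linarith
      linarith
    have hA : θ' * ((v - u) / v) ≤ 1 - (u / v) ^ θ := by
      have hrw : θ' * ((v - u) / v) = θ' - θ' * (u / v) := by field_simp
      rw [hrw]; linarith
    have hB : θ' * (α * u ^ θ / 2) ≤ 1 - (u / v) ^ θ :=
      le_trans (mul_le_mul_of_nonneg_left hfrac hθ'0.le) hA
    have huu : u ^ (-θ) * u ^ θ = 1 := by
      rw [← Real.rpow_add hu]; simp
    have hmain : θ' * α / 2 ≤ u ^ (-θ) * (1 - (u / v) ^ θ) := by
      have h := mul_le_mul_of_nonneg_left hB hupos.le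
      have heq : u ^ (-θ) * (θ' * (α * u ^ θ / 2)) = θ' * α / 2 := by
        linear_combination (θ' * α / 2) * huu
      linarith
    calc v ^ (-θ) + θ' * α / 2
        ≤ u ^ (-θ) * (u / v) ^ θ + u ^ (-θ) * (1 - (u / v) ^ θ) := by
          rw [hid]; linarith
      _ = u ^ (-θ) := by ring
  · -- case 2u < v
    refine le_trans (add_le_add_right (min_le_right _ _) _) ?_
    have hθneg : -θ ≤ 0 := by linarith
    have h2u : v ^ (-θ) ≤ (2 * u) ^ (-θ) :=
      Real.rpow_le_rpow_of_nonpos (by positivity) h2.le hθneg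
    have hsplit : (2 * u) ^ (-θ) = 2 ^ (-θ) * u ^ (-θ) :=
      Real.mul_rpow (by norm_num) hu.le
    have hDu : D ^ (-θ) ≤ u ^ (-θ) := Real.rpow_le_rpow_of_nonpos hu huD hθneg
    have h2θ : (2:ℝ) ^ (-θ) < 1 :=
      Real.rpow_lt_one_of_one_lt_of_neg one_lt_two (by linarith)
    have hm : (1 - 2 ^ (-θ)) * D ^ (-θ) ≤ (1 - 2 ^ (-θ)) * u ^ (-θ) :=
      mul_le_mul_of_nonneg_left hDu (by linarith)
    have hring : (1 - 2 ^ (-θ)) * u ^ (-θ) + 2 ^ (-θ) * u ^ (-θ) = u ^ (-θ) := by ring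
    linarith [hsplit ▸ h2u]

theorem recurrence_sublinear_rate
    (δ : ℕ → ℝ) (hnn : ∀ k : ℕ, 0 ≤ δ k) (hmono : ∀ k : ℕ, δ (k + 1) ≤ δ k)
    (a b γ : ℝ) (ha : 0 ≤ a) (hb : 0 ≤ b) (hγ : 0 < γ ∧ γ < 1)
    (hrec : ∀ k : ℕ, δ (k + 1) ≤ a * (δ k - δ (k + 1)) + b * (δ k - δ (k + 1)) ^ γ) :
    ∃ C : ℝ, 0 < C ∧ ∀ k : ℕ, 1 ≤ k → δ k ≤ C * (k : ℝ) ^ (-(γ / (1 - γ))) := by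
  obtain ⟨hγ0, hγ1⟩ := hγ
  have hγne : γ ≠ 0 := hγ0.ne'
  have h1γ : 0 < 1 - γ := by linarith
  have hanti : Antitone δ := antitone_nat_of_succ_le hmono
  -- trivial case
  rcases eq_or_lt_of_le (hnn 1) with hδ1 | hδ1
  · refine ⟨1, one_pos, fun k hk => ?_⟩
    have hk0 : (0:ℝ) < (k:ℝ) := by exact_mod_cast hk
    have h0 : δ k ≤ 0 := by rw [hδ1]; exact hanti hk
    have : (0:ℝ) < (k:ℝ) ^ (-(γ / (1 - γ))) := Real.rpow_pos_of_pos hk0 _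
    nlinarith
  -- main case
  set θ : ℝ := (1 - γ) / γ with hθdef
  have hθ : 0 < θ := div_pos h1γ hγ0
  have hθ1 : θ + 1 = 1 / γ := by rw [hθdef]; field_simp; ring
  have hδ0 : 0 < δ 0 := lt_of_lt_of_le hδ1 (hmono 0)
  set c : ℝ := a * (δ 0 + 1) + b + 1 with hcdef
  have hc1 : 1 ≤ c := by nlinarith
  have hc0 : 0 < c := by linarith
  set α : ℝ := c ^ (-(θ + 1)) with hαdef
  have hα : 0 < α := Real.rpow_pos_of_pos hc0 _
  -- the per-step gap inequality
  have hgap : ∀ k : ℕ, 0 < δ (k + 1) → α * δ (k + 1) ^ (θ + 1) ≤ δ k - δ (k + 1) := by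
    intro k hpos
    set Δ : ℝ := δ k - δ (k + 1) with hΔdef
    have hΔnn : 0 ≤ Δ := by have := hmono k; simp [hΔdef]; linarith
    have hΔpos : 0 < Δ := by
      rcases eq_or_lt_of_le hΔnn with h | h
      · exfalso
        have := hrec k
        rw [← hΔdef, ← h] at this
        rw [Real.zero_rpow hγne] at this
        simp at this; linarith
      · exact h
    have hΔδ0 : Δ ≤ δ 0 := by
      have h1 : δ k ≤ δ 0 := hanti (Nat.zero_le k)
      have h2 : 0 ≤ δ (k + 1) := hnn _
      simp [hΔdef]; linarith
    have hΔγpos : 0 < Δ ^ γ := Real.rpow_pos_of_pos hΔpos _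
    have hΔ1γ : Δ ^ (1 - γ) ≤ δ 0 + 1 := by
      rcases le_or_gt Δ 1 with hΔ1 | hΔ1
      · have := Real.rpow_le_one hΔnn hΔ1 h1γ.le
        linarith
      · have h1 : Δ ^ (1 - γ) ≤ Δ ^ (1:ℝ) :=
          Real.rpow_le_rpow_of_exponent_le hΔ1.le (by linarith)
        rw [Real.rpow_one] at h1
        linarith
    have hΔsplit : Δ = Δ ^ (1 - γ) * Δ ^ γ := by
      rw [← Real.rpow_add hΔpos]; simp
    have hcΔ : δ (k + 1) ≤ c * Δ ^ γ := by
      have h0 : Δ ^ (1 - γ) * Δ ^ γ ≤ (δ 0 + 1) * Δ ^ γ :=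
        mul_le_mul_of_nonneg_right hΔ1γ hΔγpos.le
      have h1 : a * Δ ≤ a * ((δ 0 + 1) * Δ ^ γ) := by
        calc a * Δ = a * (Δ ^ (1 - γ) * Δ ^ γ) := by rw [← hΔsplit]
          _ ≤ a * ((δ 0 + 1) * Δ ^ γ) := mul_le_mul_of_nonneg_left h0 ha
      have h2 := hrec k
      rw [← hΔdef] at h2
      nlinarith [hΔγpos.le]
    -- raise to power 1/γ
    have hdiv : δ (k + 1) / c ≤ Δ ^ γ := (div_le_iff₀ hc0).2 (by linarith [hcΔ])
    have hpow : (δ (k + 1) / c) ^ (1 / γ) ≤ (Δ ^ γ) ^ (1 / γ) :=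
      Real.rpow_le_rpow (by positivity) hdiv (by positivity)
    have hΔid : (Δ ^ γ) ^ (1 / γ) = Δ := by
      rw [← Real.rpow_mul hΔnn, mul_one_div, div_self hγne, Real.rpow_one]
    have hsplit2 : α * δ (k + 1) ^ (θ + 1) = (δ (k + 1) / c) ^ (1 / γ) := by
      rw [Real.div_rpow (hnn _) hc0.le, hαdef, hθ1, Real.rpow_neg hc0.le]
      ring
    rw [hsplit2]
    calc (δ (k + 1) / c) ^ (1 / γ) ≤ (Δ ^ γ) ^ (1 / γ) := hpow
      _ = Δ := hΔid
  -- constants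
  set μ : ℝ := min (min θ 1 * α / 2) ((1 - 2 ^ (-θ)) * (δ 0) ^ (-θ)) with hμdef
  have hμ : 0 < μ := by
    apply lt_min
    · have h1 : 0 < min θ 1 := lt_min hθ one_pos
      positivity
    · have h2θ : (2:ℝ) ^ (-θ) < 1 :=
        Real.rpow_lt_one_of_one_lt_of_neg one_lt_two (by linarith)
      have := Real.rpow_pos_of_pos hδ0 (-θ)
      nlinarith
  set ν : ℝ := min ((δ 1) ^ (-θ)) μ with hνdef
  have hν : 0 < ν := lt_min (Real.rpow_pos_of_pos hδ1 _) hμ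
  have hνμ : ν ≤ μ := min_le_right _ _
  -- the induction
  have hind : ∀ k : ℕ, 1 ≤ k → 0 < δ k → ν * k ≤ (δ k) ^ (-θ) := by
    intro k hk
    induction k, hk using Nat.le_induction with
    | base =>
      intro _
      have h1 : ν ≤ (δ 1) ^ (-θ) := min_le_left _ _
      simpa using h1
    | succ k hk ih =>
      intro hpos
      have hposk : 0 < δ k := lt_of_lt_of_le hpos (hmono k)
      have hih := ih hposk
      have hstep := key_step θ α (δ 0) (δ (k + 1)) (δ k) hθ hα hpos (hmono k)
        (hanti (Nat.zero_le (k + 1))) (hgap k hpos)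
      rw [← hμdef] at hstep
      push_cast
      push_cast at hih
      nlinarith [hstep, hih, hνμ]
  -- conclusion
  refine ⟨ν ^ (-(γ / (1 - γ))), Real.rpow_pos_of_pos hν _, fun k hk => ?_⟩
  have hk0 : (0:ℝ) < (k:ℝ) := by exact_mod_cast hk
  rcases eq_or_lt_of_le (hnn k) with h0 | h0
  · rw [← h0]
    positivity
  · have h := hind k hk h0
    have hνk : 0 < ν * (k:ℝ) := by positivity
    have hmono' : ((δ k) ^ (-θ)) ^ (-(γ / (1 - γ))) ≤ (ν * (k:ℝ)) ^ (-(γ / (1 - γ))) :=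
      Real.rpow_le_rpow_of_nonpos hνk h (neg_nonpos.2 (div_nonneg hγ0.le h1γ.le))
    have hid : ((δ k) ^ (-θ)) ^ (-(γ / (1 - γ))) = δ k := by
      rw [← Real.rpow_mul (hnn k)]
      have hexp : -θ * -(γ / (1 - γ)) = 1 := by rw [hθdef]; field_simp
      rw [hexp, Real.rpow_one]
    have hmul : (ν * (k:ℝ)) ^ (-(γ / (1 - γ)))
        = ν ^ (-(γ / (1 - γ))) * (k:ℝ) ^ (-(γ / (1 - γ))) :=
      Real.mul_rpow hν.le hk0.le
    rw [← hmul, ← hid]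
    exact hmono'
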